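/- Define the ψ-Hermite polynomials by H_n := Σ_{k≥0} ((−1/2)^k/k_ψ!)·∂_ψ^{2k}(X^n) for n ≥ 0 (a finite sum for each n). Then the sequence (H_n) is a ψ-Appell sequence: ∂_ψ(H_n) = n_ψ·H_{n−1} for all n ≥ 1, and ∂_ψ(H_0) = 0. -/
import Mathlib


open Polynomial Finset

lemma aux_pow_zero {K : Type*} [Field K]
    (nψ : ℕ → K)
    (D : Polynomial K →ₗ[K] Polynomial K)
    (hD : ∀ n : ℕ, D (X ^ (n + 1)) = nψ (n + 1) • X ^ n)
    (hD1 : D 1 = 0) :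
    ∀ j m : ℕ, j < m → (D ^ m) (X ^ j : Polynomial K) = 0 := by
  have key : ∀ j : ℕ, (D ^ (j + 1)) (X ^ j : Polynomial K) = 0 := by
    intro j
    induction j with
    | zero => simpa using hD1
    | succ j ih =>
      rw [pow_succ, Module.End.mul_apply, hD j, map_smul, ih, smul_zero]
  intro j m hjm
  obtain ⟨c, rfl⟩ := Nat.exists_eq_add_of_le hjm
  rw [add_comm, pow_add]
  simp [key j]

/-- Define the ψ-Hermite polynomials by
`H n := Σ_{k≥0} ((-1/2)^k / k_ψ!) • ∂_ψ^(2k) (Xⁿ)` (a finite sum for each `n`: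
the terms with `2k > n` vanish).  Then `(H n)` is a ψ-Appell sequence:
`∂_ψ (H n) = n_ψ • H (n-1)` for all `n ≥ 1`, and `∂_ψ (H 0) = 0`. -/
theorem stmt12 {K : Type*} [Field K] [CharZero K]
    (ψ : ℕ → K) (hψ : ∀ n, ψ n ≠ 0)
    (nψ : ℕ → K) (hnψ0 : nψ 0 = 0)
    (hnψ : ∀ n : ℕ, 1 ≤ n → nψ n = ψ (n - 1) / ψ n)
    (hadm : ∀ n : ℕ, 1 ≤ n → nψ n ≠ 0)
    (nψfact : ℕ → K) (hfact0 : nψfact 0 = 1)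
    (hfact : ∀ n : ℕ, nψfact (n + 1) = nψ (n + 1) * nψfact n)
    (D : Polynomial K →ₗ[K] Polynomial K)
    (hD : ∀ n : ℕ, D (X ^ (n + 1)) = nψ (n + 1) • X ^ n)
    (hD1 : D 1 = 0)
    (H : ℕ → Polynomial K)
    (hH : ∀ n : ℕ, H n = ∑ k ∈ Finset.range (n + 1),
      ((-(1 : K) / 2) ^ k / nψfact k) • ((D ^ (2 * k)) (X ^ n))) :
    (∀ n : ℕ, 1 ≤ n → D (H n) = nψ n • H (n - 1)) ∧
    D (H 0) = 0 := by
  have hzero := aux_pow_zero nψ D hD hD1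
  constructor
  · intro n hn
    obtain ⟨m, rfl⟩ := Nat.exists_eq_add_of_le hn
    rw [add_comm 1 m]
    rw [hH, map_sum]
    have step : ∀ k : ℕ, D (((-(1 : K) / 2) ^ k / nψfact k) • ((D ^ (2 * k)) (X ^ (m + 1))))
        = ((-(1 : K) / 2) ^ k / nψfact k) • (nψ (m + 1) • (D ^ (2 * k)) (X ^ m)) := by
      intro k
      rw [map_smul]
      congr 1
      have hcomm : D ((D ^ (2 * k)) (X ^ (m + 1))) = (D ^ (2 * k)) (D (X ^ (m + 1))) := by
        rw [← Module.End.mul_apply, ← Module.End.mul_apply, ← pow_succ, ← pow_succ']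
      rw [hcomm, hD m, map_smul]
    simp only [step]
    rw [hH]
    rw [Nat.add_sub_cancel, Finset.sum_range_succ]
    have hlast : (D ^ (2 * (m + 1))) (X ^ m : Polynomial K) = 0 := hzero m (2 * (m + 1)) (by omega)
    rw [hlast, smul_zero, smul_zero, add_zero, Finset.smul_sum]
    refine Finset.sum_congr rfl fun k _ => ?_
    rw [smul_comm]
  · rw [hH]
    simp only [Finset.range_one, Finset.sum_singleton, pow_zero, hfact0, mul_zero]
    simp [hD1]
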